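/- Let C be a right Hopf-Galois co-object over a Hopf algebra H with antipode S and cotranslation map τ. Then τ(a·τ(b⊗c) ⊗ d) = S(τ(b⊗c))·τ(a⊗d) for all a,b,c,d ∈ C. -/

import Mathlib

open Coalgebra TensorProduct

universe u v w

/-- The canonical map `C ⊗ H → C ⊗ C`, `c ⊗ h ↦ Σ c₁ ⊗ c₂·h`, for a right action
`act` of `H` on `C`. -/
noncomputable def canMap {F : Type u} {C : Type v} {H : Type w} [Field F]
    [AddCommGroup C] [Module F C] [Coalgebra F C] [AddCommGroup H] [Module F H]
    (act : C →ₗ[F] H →ₗ[F] C) : C ⊗[F] H →ₗ[F] C ⊗[F] C :=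
  (LinearMap.lTensor C (TensorProduct.lift act)) ∘ₗ
    (TensorProduct.assoc F C C H).toLinearMap ∘ₗ
    (LinearMap.rTensor H (comul (R := F)))

/-- The cotranslation map `τ = (ε ⊗ id) ∘ can⁻¹ : C ⊗ C → H`, where `inv` is the
inverse of the canonical map. -/
noncomputable def cotr {F : Type u} {C : Type v} {H : Type w} [Field F]
    [AddCommGroup C] [Module F C] [Coalgebra F C] [AddCommGroup H] [Module F H]
    (inv : C ⊗[F] C →ₗ[F] C ⊗[F] H) : C ⊗[F] C →ₗ[F] H :=
  (TensorProduct.lid F H).toLinearMap ∘ₗ (LinearMap.rTensor H (counit (R := F))) ∘ₗ inv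

/-- `τ(a·τ(b⊗c) ⊗ d) = S(τ(b⊗c))·τ(a⊗d)`. -/
theorem cotr_antipode_mul {F : Type u} {C : Type v} {H : Type w} [Field F]
    [AddCommGroup C] [Module F C] [Coalgebra F C] [Ring H] [HopfAlgebra F H]
    (act : C →ₗ[F] H →ₗ[F] C)
    (hact_one : ∀ c : C, act c 1 = c)
    (hact_mul : ∀ (c : C) (h k : H), act (act c h) k = act c (h * k))
    (hact_comul : ∀ (c : C) (h : H) (ιc : Type v) (rc : Coalgebra.Repr F c ιc)
      (ιh : Type w) (rh : Coalgebra.Repr F h ιh),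
      comul (R := F) (act c h) = ∑ i ∈ rc.index, ∑ j ∈ rh.index,
        act (rc.left i) (rh.left j) ⊗ₜ[F] act (rc.right i) (rh.right j))
    (hact_counit : ∀ (c : C) (h : H),
      counit (R := F) (act c h) = counit (R := F) c * counit (R := F) h)
    (hker : LinearMap.ker (counit (R := F) : C →ₗ[F] F) =
      Submodule.span F {x : C | ∃ (c : C) (h : H), x = act c h - counit (R := F) h • c})
    (inv : C ⊗[F] C →ₗ[F] C ⊗[F] H)
    (hinv₁ : canMap act ∘ₗ inv = LinearMap.id)
    (hinv₂ : inv ∘ₗ canMap act = LinearMap.id)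
    :
    ∀ a b c d : C,
      cotr inv (act a (cotr inv (b ⊗ₜ[F] c)) ⊗ₜ[F] d) =
        HopfAlgebra.antipode (R := F) (cotr inv (b ⊗ₜ[F] c)) * cotr inv (a ⊗ₜ[F] d) := by
  classical
  set S : H →ₗ[F] H := HopfAlgebra.antipode (R := F) with hS
  set τ : C ⊗[F] C →ₗ[F] H := cotr inv with hτ
  -- The canonical map on a pure tensor, via a representation of `comul c`
  have hcan_tmul : ∀ (c : C) (h : H) (rc : Coalgebra.Repr F c (C × C)),
      canMap act (c ⊗ₜ[F] h) = ∑ i ∈ rc.index, rc.left i ⊗ₜ[F] act (rc.right i) h := by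
    intro c h rc
    simp only [canMap, LinearMap.coe_comp, Function.comp_apply, LinearEquiv.coe_coe,
      LinearMap.rTensor_tmul, ← rc.eq, sum_tmul, map_sum, _root_.TensorProduct.assoc_tmul,
      LinearMap.lTensor_tmul, lift.tmul]
  -- τ ∘ can = ε ⊗ id
  have hτcan : ∀ x : C ⊗[F] H, τ (canMap act x) =
      (TensorProduct.lid F H) (LinearMap.rTensor H (counit (R := F)) x) := by
    intro x
    have hx : inv (canMap act x) = x := LinearMap.congr_fun hinv₂ x
    simp only [hτ, cotr, LinearMap.coe_comp, Function.comp_apply, LinearEquiv.coe_coe, hx]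
  have hτcan_tmul : ∀ (c : C) (h : H),
      τ (canMap act (c ⊗ₜ[F] h)) = counit (R := F) c • h := by
    intro c h
    rw [hτcan]
    simp
  -- can intertwines right multiplication
  have hcan_mul : ∀ (c : C) (h k : H),
      LinearMap.lTensor C (act.flip k) (canMap act (c ⊗ₜ[F] h)) =
        canMap act (c ⊗ₜ[F] (h * k)) := by
    intro c h k
    obtain rc := Coalgebra.Repr.arbitrary F c
    rw [hcan_tmul c h rc, hcan_tmul c (h * k) rc, map_sum]
    refine Finset.sum_congr rfl fun i _ => ?_
    simp [hact_mul]
  -- (B) : τ(z · (1 ⊗ k)) = τ(z) * k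
  have hB : ∀ (z : C ⊗[F] C) (k : H),
      τ (LinearMap.lTensor C (act.flip k) z) = τ z * k := by
    intro z k
    have hz : canMap act (inv z) = z := LinearMap.congr_fun hinv₁ z
    rw [← hz]
    generalize inv z = w
    induction w using TensorProduct.induction_on with
    | zero => simp
    | tmul c h => rw [hcan_mul, hτcan_tmul, hτcan_tmul, smul_mul_assoc]
    | add x y hx hy => simp only [map_add, hx, hy, add_mul]
  -- (B) on pure tensors
  have hBp : ∀ (u v : C) (k : H), τ (u ⊗ₜ[F] act v k) = τ (u ⊗ₜ[F] v) * k := by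
    intro u v k
    have := hB (u ⊗ₜ[F] v) k
    simpa using this
  -- counit laws in scalar form
  have hcounit_left : ∀ (x : H) (rx : Coalgebra.Repr F x (H × H)),
      ∑ j ∈ rx.index, counit (R := F) (rx.left j) • rx.right j = x := by
    intro x rx
    calc ∑ j ∈ rx.index, counit (R := F) (rx.left j) • rx.right j
        = TensorProduct.lid F H
            (∑ j ∈ rx.index, counit (R := F) (rx.left j) ⊗ₜ[F] rx.right j) := by
          rw [map_sum]
          exact Finset.sum_congr rfl fun j _ => by simp
      _ = TensorProduct.lid F H ((1 : F) ⊗ₜ[F] x) := by rw [Coalgebra.sum_counit_tmul_eq rx]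
      _ = x := by simp
  have hcounit_right : ∀ (x : H) (rx : Coalgebra.Repr F x (H × H)),
      ∑ j ∈ rx.index, counit (R := F) (rx.right j) • rx.left j = x := by
    intro x rx
    calc ∑ j ∈ rx.index, counit (R := F) (rx.right j) • rx.left j
        = TensorProduct.rid F H
            (∑ j ∈ rx.index, rx.left j ⊗ₜ[F] counit (R := F) (rx.right j)) := by
          rw [map_sum]
          exact Finset.sum_congr rfl fun j _ => by simp
      _ = TensorProduct.rid F H (x ⊗ₜ[F] (1 : F)) := by rw [Coalgebra.sum_tmul_counit_eq rx]
      _ = x := by simp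
  -- (A') : ∑∑ τ(c₁·h₁ ⊗ c₂·h₂) = (ε(c)ε(h)) • 1
  have hA' : ∀ (c : C) (h : H) (rc : Coalgebra.Repr F c (C × C))
      (rh : Coalgebra.Repr F h (H × H)),
      ∑ i ∈ rc.index, ∑ j ∈ rh.index,
        τ (act (rc.left i) (rh.left j) ⊗ₜ[F] act (rc.right i) (rh.right j)) =
      (counit (R := F) c * counit (R := F) h) • (1 : H) := by
    intro c h rc rh
    obtain rx := Coalgebra.Repr.arbitrary F (act c h)
    have h1 : canMap act (act c h ⊗ₜ[F] (1 : H)) = ∑ i ∈ rc.index, ∑ j ∈ rh.index,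
        act (rc.left i) (rh.left j) ⊗ₜ[F] act (rc.right i) (rh.right j) := by
      rw [hcan_tmul (act c h) 1 rx]
      have h2 : ∑ i ∈ rx.index, rx.left i ⊗ₜ[F] act (rx.right i) 1
          = ∑ i ∈ rx.index, rx.left i ⊗ₜ[F] rx.right i :=
        Finset.sum_congr rfl fun i _ => by rw [hact_one]
      rw [h2, rx.eq, hact_comul c h _ rc _ rh]
    calc ∑ i ∈ rc.index, ∑ j ∈ rh.index,
          τ (act (rc.left i) (rh.left j) ⊗ₜ[F] act (rc.right i) (rh.right j))
        = τ (∑ i ∈ rc.index, ∑ j ∈ rh.index,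
            act (rc.left i) (rh.left j) ⊗ₜ[F] act (rc.right i) (rh.right j)) := by
          rw [map_sum]
          exact Finset.sum_congr rfl fun i _ => (map_sum τ _ _).symm
      _ = τ (canMap act (act c h ⊗ₜ[F] (1 : H))) := by rw [h1]
      _ = counit (R := F) (act c h) • (1 : H) := hτcan_tmul _ _
      _ = (counit (R := F) c * counit (R := F) h) • (1 : H) := by rw [hact_counit]
  -- (E) : ∑ τ(c₁·h ⊗ c₂) = ε(c) • S(h)
  have hE : ∀ (c : C) (h : H) (rc : Coalgebra.Repr F c (C × C)),
      ∑ i ∈ rc.index, τ (act (rc.left i) h ⊗ₜ[F] rc.right i)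
        = counit (R := F) c • S h := by
    intro c h rc
    set Bi : H ⊗[F] H →ₗ[F] H :=
      ∑ i ∈ rc.index, (τ ∘ₗ TensorProduct.map (act (rc.left i)) (act (rc.right i))) with hBi
    have hBit : ∀ x y : H, Bi (x ⊗ₜ[F] y) =
        ∑ i ∈ rc.index, τ (act (rc.left i) x ⊗ₜ[F] act (rc.right i) y) := by
      intro x y
      simp [hBi, LinearMap.sum_apply]
    set T : H ⊗[F] (H ⊗[F] H) →ₗ[F] H :=
      LinearMap.mul' F H ∘ₗ TensorProduct.map Bi S ∘ₗ
        (TensorProduct.assoc F H H H).symm.toLinearMap with hT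
    have hTt : ∀ x y z : H, T (x ⊗ₜ[F] (y ⊗ₜ[F] z)) = Bi (x ⊗ₜ[F] y) * S z := by
      intro x y z
      simp [hT]
    obtain rh := Coalgebra.Repr.arbitrary F h
    let rl : (j : H × H) → Coalgebra.Repr F (rh.left j) (H × H) := fun j => Coalgebra.Repr.arbitrary F _
    let rr : (j : H × H) → Coalgebra.Repr F (rh.right j) (H × H) := fun j => Coalgebra.Repr.arbitrary F _
    have key := Coalgebra.sum_tmul_tmul_eq rh rl rr
    have keyT := congrArg T key
    simp only [map_sum, hTt] at keyT
    -- left-hand side of keyT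
    have hleft : ∑ j ∈ rh.index, ∑ k ∈ (rl j).index,
        Bi ((rl j).left k ⊗ₜ[F] (rl j).right k) * S (rh.right j)
        = counit (R := F) c • S h := by
      calc ∑ j ∈ rh.index, ∑ k ∈ (rl j).index,
            Bi ((rl j).left k ⊗ₜ[F] (rl j).right k) * S (rh.right j)
          = ∑ j ∈ rh.index,
            (∑ k ∈ (rl j).index, Bi ((rl j).left k ⊗ₜ[F] (rl j).right k)) * S (rh.right j) :=
            Finset.sum_congr rfl fun j _ => (Finset.sum_mul _ _ _).symm
        _ = ∑ j ∈ rh.index,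
            ((counit (R := F) c * counit (R := F) (rh.left j)) • (1 : H)) * S (rh.right j) := by
            refine Finset.sum_congr rfl fun j _ => ?_
            congr 1
            rw [← hA' c (rh.left j) rc (rl j), Finset.sum_comm]
            exact Finset.sum_congr rfl fun k _ => hBit _ _
        _ = ∑ j ∈ rh.index,
            counit (R := F) c • (counit (R := F) (rh.left j) • S (rh.right j)) := by
            refine Finset.sum_congr rfl fun j _ => ?_
            rw [smul_mul_assoc, one_mul, mul_smul]
        _ = counit (R := F) c • S (∑ j ∈ rh.index, counit (R := F) (rh.left j) • rh.right j) := by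
            rw [map_sum, Finset.smul_sum]
            exact Finset.sum_congr rfl fun j _ => by rw [map_smul]
        _ = counit (R := F) c • S h := by rw [hcounit_left h rh]
    -- right-hand side of keyT
    have hright : ∑ j ∈ rh.index, ∑ k ∈ (rr j).index,
        Bi (rh.left j ⊗ₜ[F] (rr j).left k) * S ((rr j).right k)
        = ∑ i ∈ rc.index, τ (act (rc.left i) h ⊗ₜ[F] rc.right i) := by
      have hstep : ∀ j ∈ rh.index, ∑ k ∈ (rr j).index,
          Bi (rh.left j ⊗ₜ[F] (rr j).left k) * S ((rr j).right k)
          = ∑ i ∈ rc.index, counit (R := F) (rh.right j) •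
              τ (act (rc.left i) (rh.left j) ⊗ₜ[F] rc.right i) := by
        intro j _
        calc ∑ k ∈ (rr j).index, Bi (rh.left j ⊗ₜ[F] (rr j).left k) * S ((rr j).right k)
            = ∑ k ∈ (rr j).index, ∑ i ∈ rc.index,
              τ (act (rc.left i) (rh.left j) ⊗ₜ[F] act (rc.right i) ((rr j).left k))
                * S ((rr j).right k) := by
              refine Finset.sum_congr rfl fun k _ => ?_
              rw [hBit, Finset.sum_mul]
          _ = ∑ i ∈ rc.index, ∑ k ∈ (rr j).index,
              τ (act (rc.left i) (rh.left j) ⊗ₜ[F]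
                act (rc.right i) ((rr j).left k * S ((rr j).right k))) := by
              rw [Finset.sum_comm]
              refine Finset.sum_congr rfl fun i _ => Finset.sum_congr rfl fun k _ => ?_
              rw [← hact_mul]
              exact (hBp _ _ _).symm
          _ = ∑ i ∈ rc.index,
              τ (act (rc.left i) (rh.left j) ⊗ₜ[F]
                act (rc.right i) (∑ k ∈ (rr j).index, (rr j).left k * S ((rr j).right k))) := by
              refine Finset.sum_congr rfl fun i _ => ?_
              rw [map_sum, tmul_sum, map_sum]
          _ = ∑ i ∈ rc.index, counit (R := F) (rh.right j) •
              τ (act (rc.left i) (rh.left j) ⊗ₜ[F] rc.right i) := by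
              refine Finset.sum_congr rfl fun i _ => ?_
              rw [HopfAlgebra.sum_mul_antipode_eq_smul (rr j), map_smul, tmul_smul,
                map_smul, hact_one]
      calc ∑ j ∈ rh.index, ∑ k ∈ (rr j).index,
            Bi (rh.left j ⊗ₜ[F] (rr j).left k) * S ((rr j).right k)
          = ∑ j ∈ rh.index, ∑ i ∈ rc.index, counit (R := F) (rh.right j) •
              τ (act (rc.left i) (rh.left j) ⊗ₜ[F] rc.right i) :=
            Finset.sum_congr rfl hstep
        _ = ∑ i ∈ rc.index, ∑ j ∈ rh.index, counit (R := F) (rh.right j) •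
              τ (act (rc.left i) (rh.left j) ⊗ₜ[F] rc.right i) := Finset.sum_comm
        _ = ∑ i ∈ rc.index, τ (act (rc.left i) h ⊗ₜ[F] rc.right i) := by
            refine Finset.sum_congr rfl fun i _ => ?_
            calc ∑ j ∈ rh.index, counit (R := F) (rh.right j) •
                  τ (act (rc.left i) (rh.left j) ⊗ₜ[F] rc.right i)
                = τ (act (rc.left i)
                    (∑ j ∈ rh.index, counit (R := F) (rh.right j) • rh.left j) ⊗ₜ[F]
                      rc.right i) := by
                  rw [map_sum, sum_tmul, map_sum]
                  exact Finset.sum_congr rfl fun j _ => by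
                    rw [map_smul, ← smul_tmul', map_smul]
              _ = τ (act (rc.left i) h ⊗ₜ[F] rc.right i) := by rw [hcounit_right h rh]
    rw [hleft, hright] at keyT
    exact keyT.symm
  -- Main identity on the image of the canonical map
  have hMain : ∀ (h : H) (w : C ⊗[F] H),
      τ (LinearMap.rTensor C (act.flip h) (canMap act w)) = S h * τ (canMap act w) := by
    intro h w
    induction w using TensorProduct.induction_on with
    | zero => simp
    | tmul c k =>
      obtain rc := Coalgebra.Repr.arbitrary F c
      rw [hτcan_tmul c k, hcan_tmul c k rc, map_sum, map_sum]
      calc ∑ i ∈ rc.index, τ (LinearMap.rTensor C (act.flip h)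
              (rc.left i ⊗ₜ[F] act (rc.right i) k))
          = ∑ i ∈ rc.index, τ (act (rc.left i) h ⊗ₜ[F] rc.right i) * k := by
            refine Finset.sum_congr rfl fun i _ => ?_
            rw [LinearMap.rTensor_tmul, LinearMap.flip_apply, hBp]
        _ = (∑ i ∈ rc.index, τ (act (rc.left i) h ⊗ₜ[F] rc.right i)) * k :=
            (Finset.sum_mul _ _ _).symm
        _ = (counit (R := F) c • S h) * k := by rw [hE c h rc]
        _ = S h * counit (R := F) c • k := by
            rw [smul_mul_assoc, mul_smul_comm]
    | add x y hx hy =>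
      simp only [map_add, hx, hy, mul_add]
  -- Conclusion
  intro a b c d
  set g : H := τ (b ⊗ₜ[F] c) with hg
  have h1 : act a g ⊗ₜ[F] d = LinearMap.rTensor C (act.flip g) (a ⊗ₜ[F] d) := by
    rw [LinearMap.rTensor_tmul, LinearMap.flip_apply]
  have h2 : canMap act (inv (a ⊗ₜ[F] d)) = a ⊗ₜ[F] d := LinearMap.congr_fun hinv₁ _
  rw [h1, ← h2, hMain g (inv (a ⊗ₜ[F] d))]
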